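/- arXiv:2410.06481 — 2 statements merged into one kernel-verified Lean document; each statement's English description precedes it below -/
import Mathlib

section
/- Let b = ℓ^{-1} ∘ f_j ∘ ℓ on the Ulam–Harris tree. For every node v in zone z ≤ j with z ≥ 1, the heights satisfy ht(v) + ht(b(v)) = z + 1. In particular, if z(v) = 4k and ht(v) ≤ 2k + 1, then ht(b(v)) ≥ 2k. -/
/-- The zone of an Ulam–Harris node is the sum of its entries. -/
def zone (u : List ℕ+) : ℕ := (u.map (fun m : ℕ+ => (m : ℕ))).sum

/-- The child-sibling encoding `ℓ`. -/
def ell (u : List ℕ+) : List Bool :=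
  u.flatMap (fun m => true :: List.replicate ((m : ℕ) - 1) false)

/-- `f_j` complements coordinates `2` through `j` of a binary string. -/
def fstr (j : ℕ) (s : List Bool) : List Bool :=
  s.mapIdx (fun i b => if 0 < i ∧ i < j then !b else b)

lemma ell_length (u : List ℕ+) : (ell u).length = zone u := by
  induction u with
  | nil => rfl
  | cons m u ih =>
    simp [ell, zone] at ih ⊢
    have hm : 1 ≤ (m:ℕ) := m.one_le
    omega

lemma ell_count (u : List ℕ+) : (ell u).count true = u.length := by
  induction u with
  | nil => rfl
  | cons m u ih =>
    simp [ell, List.count_cons, List.count_append, List.count_replicate] at ih ⊢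
    exact ih

lemma mapIdx_flip (p : ℕ → Prop) [DecidablePred p] (s : List Bool)
    (h : ∀ i < s.length, p i) :
    s.mapIdx (fun i b => if p i then !b else b) = s.map (!·) := by
  induction s generalizing p with
  | nil => rfl
  | cons a t ih =>
    rw [List.mapIdx_cons, if_pos (h 0 (by simp))]
    simp only [List.map_cons, List.cons.injEq, true_and]
    exact ih (fun i => p (i + 1)) (fun i hi => h (i + 1) (by simpa using Nat.succ_lt_succ hi))

lemma count_map_not (t : List Bool) : (t.map (!·)).count true = t.length - t.count true := by
  induction t with
  | nil => rfl
  | cons a t ih =>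
    have hle : t.count true ≤ t.length := List.count_le_length
    cases a <;> simp [List.count_cons, ih] <;> omega

/-- Let `b = ℓ⁻¹ ∘ f_j ∘ ℓ`. For every node `v` in zone `z` with `1 ≤ z ≤ j`, the heights
(sequence lengths) satisfy `ht(v) + ht(b(v)) = z + 1`.  In particular, with `j = 4k`, if
`z(v) = 4k` and `ht(v) ≤ 2k + 1` then `ht(b(v)) ≥ 2k`. -/
theorem height_add_height_flip (j : ℕ) (hj : 2 ≤ j) (b : List ℕ+ → List ℕ+)
    (hb : ∀ v, ell (b v) = fstr j (ell v)) :
    (∀ v : List ℕ+, 1 ≤ zone v → zone v ≤ j →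
      v.length + (b v).length = zone v + 1) ∧
    (∀ k : ℕ, ∀ v : List ℕ+, j = 4 * k → zone v = 4 * k → v.length ≤ 2 * k + 1 →
      2 * k ≤ (b v).length) := by
  have main : ∀ v : List ℕ+, 1 ≤ zone v → zone v ≤ j →
      v.length + (b v).length = zone v + 1 := by
    intro v h1 h2
    obtain ⟨m, u, rfl⟩ : ∃ m u, v = m :: u := by
      cases v with
      | nil => simp [zone] at h1
      | cons m u => exact ⟨m, u, rfl⟩
    have hell : ell (m :: u) = true :: (List.replicate ((m : ℕ) - 1) false ++ ell u) := by
      simp [ell]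
    set t : List Bool := List.replicate ((m : ℕ) - 1) false ++ ell u with ht
    have hlen : t.length + 1 = zone (m :: u) := by
      have h := ell_length (m :: u)
      rw [hell] at h
      rw [← h]
      simp
    have hflip : fstr j (ell (m :: u)) = true :: t.map (!·) := by
      rw [hell]
      unfold fstr
      rw [List.mapIdx_cons]
      rw [if_neg (by simp)]
      congr 1
      exact mapIdx_flip (fun i => 0 < i + 1 ∧ i + 1 < j) t (fun i hi => ⟨by omega, by omega⟩)
    have hlv : (m :: u).length = 1 + t.count true := by
      have := ell_count (m :: u)
      rw [hell] at this
      simp [List.count_cons] at this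
      rw [List.length_cons]
      omega
    have hbv : (b (m :: u)).length = 1 + (t.length - t.count true) := by
      have := ell_count (b (m :: u))
      rw [hb, hflip] at this
      simp [List.count_cons, count_map_not] at this
      omega
    have hct : t.count true ≤ t.length := List.count_le_length
    omega
  refine ⟨main, ?_⟩
  intro k v hjk hz hl
  have hk : 1 ≤ k := by omega
  have := main v (by omega) (by omega)
  omega
end

section
/- If t is an increasing tree on [n] with embedding φ_t into the Ulam–Harris tree, then the map v ↦ b(φ_t(v)), where b = ℓ^{-1} ∘ f_{j} ∘ ℓ, also encodes an increasing tree on [n]: it satisfies the root condition, the parent-monotonicity condition, and the sibling-monotonicity condition. -/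
/-- `φ : [n] → 𝒰` encodes an increasing tree on `[n]`:
(a) the root `1` is mapped to the root `∅` of the Ulam–Harris tree;
(b) parent condition: if `φ(v) = u ⌢ (m)` then the parent `u` is the image of some
vertex `w < v`;
(c) sibling condition: if `φ(v) = u ⌢ (m)` with `m > 1` then the left sibling
`u ⌢ (m-1)` is the image of some vertex `w < v`. -/
def IsIncEmb (n : ℕ) (φ : ℕ → List ℕ+) : Prop :=
  φ 1 = [] ∧
  (∀ v, 2 ≤ v → v ≤ n → ∀ u : List ℕ+, ∀ m : ℕ+, φ v = u ++ [m] →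
    ∃ w, 1 ≤ w ∧ w < v ∧ w ≤ n ∧ φ w = u) ∧
  (∀ v, 2 ≤ v → v ≤ n → ∀ u : List ℕ+, ∀ m : ℕ+, φ v = u ++ [m] → 1 < m →
    ∃ w, 1 ≤ w ∧ w < v ∧ w ≤ n ∧ φ w = u ++ [m - 1])

lemma ell_append (u : List ℕ+) (m : ℕ+) :
    ell (u ++ [m]) = ell u ++ (true :: List.replicate ((m : ℕ) - 1) false) := by
  simp [ell]

lemma ell_eq_nil_iff (u : List ℕ+) : ell u = [] ↔ u = [] := by
  cases u <;> simp [ell]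

lemma ell_head (u : List ℕ+) : ell u = [] ∨ ∃ s, ell u = true :: s := by
  cases u with
  | nil => exact Or.inl rfl
  | cons m r =>
    exact Or.inr ⟨List.replicate ((m : ℕ) - 1) false ++ ell r, by simp [ell]⟩

lemma rep_aux : ∀ (a b : ℕ) (s1 s2 : List Bool),
    (s1 = [] ∨ ∃ t, s1 = true :: t) → (s2 = [] ∨ ∃ t, s2 = true :: t) →
    List.replicate a false ++ s1 = List.replicate b false ++ s2 → a = b ∧ s1 = s2 := by
  intro a
  induction a with
  | zero =>
    intro b s1 s2 h1 h2 h
    cases b with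
    | zero => simpa using h
    | succ b =>
      simp [List.replicate_succ] at h
      rcases h1 with h1 | ⟨t, h1⟩ <;> rw [h1] at h <;> simp at h
  | succ a IH =>
    intro b s1 s2 h1 h2 h
    cases b with
    | zero =>
      simp [List.replicate_succ] at h
      rcases h2 with h2 | ⟨t, h2⟩ <;> rw [h2] at h <;> simp at h
    | succ b =>
      simp only [List.replicate_succ, List.cons_append, List.cons.injEq] at h
      obtain ⟨hab, hs⟩ := IH b s1 s2 h1 h2 h.2
      exact ⟨by omega, hs⟩

lemma ell_inj : ∀ u1 u2 : List ℕ+, ell u1 = ell u2 → u1 = u2 := by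
  intro u1
  induction u1 with
  | nil =>
    intro u2 h
    have := (ell_eq_nil_iff u2).mp (by simpa [ell] using h.symm)
    exact this.symm
  | cons m1 r1 IH =>
    intro u2 h
    cases u2 with
    | nil => simp [ell] at h
    | cons m2 r2 =>
      have hcons : ∀ (m : ℕ+) (r : List ℕ+),
          ell (m :: r) = true :: (List.replicate ((m : ℕ) - 1) false ++ ell r) := by
        intro m r; simp [ell]
      rw [hcons, hcons, List.cons.injEq] at h
      obtain ⟨hm, hs⟩ := rep_aux _ _ _ _ (ell_head r1) (ell_head r2) h.2
      have hm' : (m1 : ℕ) = (m2 : ℕ) := by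
        have := m1.pos; have := m2.pos; omega
      have : m1 = m2 := PNat.coe_injective hm'
      rw [this, IH r2 hs]

lemma fstr_length (j : ℕ) (s : List Bool) : (fstr j s).length = s.length := by
  simp [fstr]

lemma fstr_fstr (j : ℕ) (s : List Bool) : fstr j (fstr j s) = s := by
  apply List.ext_getElem
  · simp [fstr_length]
  · intro i h1 h2
    simp only [fstr, List.getElem_mapIdx]
    split <;> simp

lemma fstr_prefix (j : ℕ) {s1 s2 : List Bool} (h : s1 <+: s2) :
    fstr j s1 <+: fstr j s2 := by
  rw [List.prefix_iff_eq_take]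
  apply List.ext_getElem
  · rw [List.length_take, fstr_length, fstr_length]
    have := h.length_le
    omega
  · intro i h1 h2
    obtain ⟨t, rfl⟩ := h
    rw [List.getElem_take]
    simp only [fstr, List.getElem_mapIdx]
    have hi : i < s1.length := by simpa [fstr_length] using h1
    rw [List.getElem_append_left hi]

lemma descend {n : ℕ} {φ : ℕ → List ℕ+} (hφ : IsIncEmb n φ) :
    ∀ v, 2 ≤ v → v ≤ n → ∀ y, ell y <+: ell (φ v) →
    (ell y).length < (ell (φ v)).length →
    ∃ w, 1 ≤ w ∧ w < v ∧ w ≤ n ∧ φ w = y := by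
  obtain ⟨hroot, hpar, hsib⟩ := hφ
  intro v
  induction v using Nat.strong_induction_on with
  | _ v IH =>
    intro h2 hn y hpre hlen
    have hx : φ v ≠ [] := by
      intro h
      rw [h] at hlen
      simp [ell] at hlen
    obtain ⟨u, m, hxm⟩ : ∃ u m, φ v = u ++ [m] := by
      rcases List.eq_nil_or_concat (φ v) with h | ⟨u, m, h⟩
      · exact absurd h hx
      · exact ⟨u, m, by simpa using h⟩
    -- write ell (φ v) = ell z ++ [c] where z is parent or left sibling
    obtain ⟨z, c, hz, hstep⟩ :
        ∃ z c, ell (φ v) = ell z ++ [c] ∧ ∃ w, 1 ≤ w ∧ w < v ∧ w ≤ n ∧ φ w = z := by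
      by_cases hm : m = 1
      · refine ⟨u, true, ?_, hpar v h2 hn u m hxm⟩
        rw [hxm, ell_append, hm]
        simp
      · have hm1 : 1 < m := lt_of_le_of_ne m.one_le (fun h => hm h.symm)
        refine ⟨u ++ [m - 1], false, ?_, hsib v h2 hn u m hxm hm1⟩
        rw [hxm, ell_append, ell_append]
        have hc : ((m - 1 : ℕ+) : ℕ) = (m : ℕ) - 1 := by
          rw [PNat.sub_coe, if_pos hm1, PNat.one_coe]
        rw [hc]
        have h2m : 2 ≤ (m : ℕ) := hm1
        have : (m : ℕ) - 1 = ((m : ℕ) - 1 - 1) + 1 := by omega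
        rw [this, List.replicate_succ']
        simp
    obtain ⟨w', hw1, hwv, hwn, hwz⟩ := hstep
    rw [hz] at hpre hlen
    have hylen : (ell y).length ≤ (ell z).length := by
      have h' : (ell z ++ [c]).length = (ell z).length + 1 := by simp
      omega
    have hpre' : ell y <+: ell z :=
      List.prefix_of_prefix_length_le hpre (List.prefix_append _ _) hylen
    rcases eq_or_lt_of_le hylen with heq | hlt
    · have : ell y = ell z := hpre'.eq_of_length heq
      exact ⟨w', hw1, hwv, hwn, by rw [hwz, ell_inj z y this.symm]⟩
    · have hz_ne : z ≠ [] := by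
        intro h
        rw [h] at hlt
        simp [ell] at hlt
      have hw2 : 2 ≤ w' := by
        rcases Nat.lt_or_ge w' 2 with h | h
        · exfalso
          have hw1' : w' = 1 := by omega
          apply hz_ne
          rw [← hwz, hw1', hroot]
        · exact h
      obtain ⟨w, ha, hb', hc', hd⟩ := IH w' hwv hw2 hwn y (by rw [hwz]; exact hpre') (by rw [hwz]; exact hlt)
      exact ⟨w, ha, lt_trans hb' hwv, hc', hd⟩

/-- If `φ_t` encodes an increasing tree on `[n]` and `b = ℓ⁻¹ ∘ f_j ∘ ℓ`, then
`v ↦ b(φ_t(v))` also encodes an increasing tree on `[n]`: it satisfies the root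
condition, the parent-monotonicity condition and the sibling-monotonicity condition. -/
theorem flip_of_incEmb (n j : ℕ) (hj : 2 ≤ j) (b : List ℕ+ → List ℕ+)
    (hb : ∀ x, ell (b x) = fstr j (ell x))
    (φ : ℕ → List ℕ+) (hφ : IsIncEmb n φ) :
    IsIncEmb n (fun v => b (φ v)) := by
  have bb : ∀ x, b (b x) = x := by
    intro x
    apply ell_inj
    rw [hb, hb, fstr_fstr]
  have hb_nil : b [] = [] := by
    apply ell_inj
    rw [hb]
    simp [ell, fstr]
  have hroot := hφ.1
  refine ⟨by simp [hroot, ell, hb_nil], ?_, ?_⟩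
  · intro v h2 hn u m hveq
    have hφv : φ v = b (u ++ [m]) := by
      have := congrArg b hveq
      rwa [bb] at this
    have hpre : ell (b u) <+: ell (φ v) := by
      rw [hφv, hb, hb, ell_append]
      exact fstr_prefix j (List.prefix_append _ _)
    have hlen : (ell (b u)).length < (ell (φ v)).length := by
      rw [hφv, hb, hb, ell_append, fstr_length, fstr_length]
      simp
    obtain ⟨w, h1, h2', h3, h4⟩ := descend hφ v h2 hn (b u) hpre hlen
    exact ⟨w, h1, h2', h3, by simp [h4, bb]⟩
  · intro v h2 hn u m hveq hm
    have hφv : φ v = b (u ++ [m]) := by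
      have := congrArg b hveq
      rwa [bb] at this
    have hkey : ell (u ++ [m]) = ell (u ++ [m - 1]) ++ [false] := by
      rw [ell_append, ell_append]
      have hc : ((m - 1 : ℕ+) : ℕ) = (m : ℕ) - 1 := by
        rw [PNat.sub_coe, if_pos hm, PNat.one_coe]
      rw [hc]
      have h2m : 2 ≤ (m : ℕ) := hm
      have : (m : ℕ) - 1 = ((m : ℕ) - 1 - 1) + 1 := by omega
      rw [this, List.replicate_succ']
      simp
    have hpre : ell (b (u ++ [m - 1])) <+: ell (φ v) := by
      rw [hφv, hb, hb, hkey]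
      exact fstr_prefix j (List.prefix_append _ _)
    have hlen : (ell (b (u ++ [m - 1]))).length < (ell (φ v)).length := by
      rw [hφv, hb, hb, hkey, fstr_length, fstr_length]
      simp
    obtain ⟨w, h1, h2', h3, h4⟩ := descend hφ v h2 hn (b (u ++ [m - 1])) hpre hlen
    exact ⟨w, h1, h2', h3, by simp [h4, bb]⟩
end
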